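/- Let F be a free group with basis a₁,…,a_m and φ a positive automorphism with each letter appearing in its own image. For a letter x, let pre(x) = { y : y ∈ supp(x) and x ∉ supp(y) }. Then the subgroup of F generated by pre(x) is φ-invariant: φ(⟨pre(x)⟩) ⊆ ⟨pre(x)⟩. -/

import Mathlib

private lemma bindIter_mono {α : Type*} (σ : α → List α) :
    ∀ (j : ℕ) {l₁ l₂ : List α}, l₁ ⊆ l₂ →
      (fun w => w.flatMap σ)^[j] l₁ ⊆ (fun w => w.flatMap σ)^[j] l₂ := by
  intro j
  induction j with
  | zero => intro l₁ l₂ h; simpa using h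
  | succ j ih =>
    intro l₁ l₂ h
    rw [Function.iterate_succ_apply, Function.iterate_succ_apply]
    apply ih
    intro b hb
    rw [List.mem_flatMap] at hb ⊢
    obtain ⟨a, ha, hba⟩ := hb
    exact ⟨a, h ha, hba⟩

private lemma bindIter_trans {α : Type*} (σ : α → List α) {y z w : α} {j k : ℕ}
    (hz : z ∈ (fun w => w.flatMap σ)^[k] [y]) (hw : w ∈ (fun w => w.flatMap σ)^[j] [z]) :
    w ∈ (fun w => w.flatMap σ)^[j + k] [y] := by
  have h1 : (fun w => w.flatMap σ)^[j] [z] ⊆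
      (fun w => w.flatMap σ)^[j] ((fun w => w.flatMap σ)^[k] [y]) :=
    bindIter_mono σ j (by simpa using hz)
  have := h1 hw
  rwa [← Function.iterate_add_apply] at this

/-- For a positive automorphism (substitution `σ`, each letter appearing in its own image),
the subgroup generated by `pre(x) = {y ∈ supp(x) : x ∉ supp(y)}` is `φ`-invariant. -/
theorem stmt_12 {α : Type*} (σ : α → List α) (hself : ∀ a, a ∈ σ a) (x : α) :
    (Subgroup.closure (FreeGroup.of ''
        {y | (∃ j, y ∈ (fun w => w.flatMap σ)^[j] [x]) ∧
          ¬ ∃ j, x ∈ (fun w => w.flatMap σ)^[j] [y]})).map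
      (FreeGroup.lift fun a => ((σ a).map FreeGroup.of).prod) ≤
    Subgroup.closure (FreeGroup.of ''
        {y | (∃ j, y ∈ (fun w => w.flatMap σ)^[j] [x]) ∧
          ¬ ∃ j, x ∈ (fun w => w.flatMap σ)^[j] [y]}) := by
  rw [MonoidHom.map_closure, Subgroup.closure_le]
  rintro _ ⟨_, ⟨y, ⟨⟨j, hyj⟩, hy2⟩, rfl⟩, rfl⟩
  simp only [FreeGroup.lift_apply_of, SetLike.mem_coe]
  apply Subgroup.list_prod_mem
  intro g hg
  rw [List.mem_map] at hg
  obtain ⟨z, hz, rfl⟩ := hg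
  apply Subgroup.subset_closure
  refine ⟨z, ⟨⟨1 + j, ?_⟩, ?_⟩, rfl⟩
  · exact bindIter_trans σ hyj (by simpa using hz)
  · rintro ⟨k, hk⟩
    exact hy2 ⟨k + 1, bindIter_trans σ (by simpa using hz) hk⟩
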